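/- Let q be a prime power, F_q the finite field with q elements, and integers 1 ≤ t ≤ ℓ ≤ m and (ℓ−t)m ≤ s ≤ ℓm. Then the minimum, over all s-dimensional F_q-linear subspaces W of Mat_{ℓ×m}, of #{M ∈ Mat_{ℓ×m} : rank M ≤ t and ⟨F,M⟩ ≠ 0 for some F ∈ W} equals ν_t(ℓ,m) − q^{ℓm−s}. (Equivalently, the s-th generalized Hamming weight of the determinantal code Ĉ_det(t;ℓ,m) equals its length minus (q^{ℓm−s} − 1)/(q−1).) -/

import Mathlib

open Finset Matrix Module

section Aux
variable {K : Type} [Field K] {l m : ℕ}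

noncomputable def Bform (K : Type) [Field K] (l m : ℕ) :
    LinearMap.BilinForm K (Matrix (Fin l) (Fin m) K) :=
  LinearMap.mk₂ K (fun G M => Matrix.trace (G * Mᵀ))
    (fun G G' M => by simp [Matrix.add_mul])
    (fun c G M => by simp)
    (fun G M M' => by simp [Matrix.transpose_add, Matrix.mul_add])
    (fun c G M => by simp [Matrix.transpose_smul, Matrix.mul_smul])

lemma Bform_apply (G M : Matrix (Fin l) (Fin m) K) :
    Bform K l m G M = ∑ i, ∑ j, G i j * M i j := by
  simp [Bform, Matrix.trace, Matrix.mul_apply, Matrix.diag]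

lemma Bform_trace (G M : Matrix (Fin l) (Fin m) K) :
    Bform K l m G M = Matrix.trace (G * Mᵀ) := rfl

lemma Bform_symm (G M : Matrix (Fin l) (Fin m) K) :
    Bform K l m G M = Bform K l m M G := by
  simp [Bform_apply, mul_comm]

lemma Bform_refl : (Bform K l m).IsRefl := by
  intro x y h
  rwa [Bform_symm] at h

lemma Bform_stdBasisMatrix (G : Matrix (Fin l) (Fin m) K) (i : Fin l) (j : Fin m) :
    Bform K l m G (Matrix.single i j 1) = G i j := by
  rw [Bform_apply]
  rw [Finset.sum_eq_single i]
  · rw [Finset.sum_eq_single j]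
    · simp [Matrix.single]
    · intro b _ hb; simp [Matrix.single, hb.symm]
    · simp
  · intro b _ hb
    apply Finset.sum_eq_zero
    intro c _
    simp [Matrix.single, hb.symm]
  · simp

lemma Bform_nondeg : (Bform K l m).Nondegenerate := by
  have key : ∀ G : Matrix (Fin l) (Fin m) K, (∀ M, Bform K l m G M = 0) → G = 0 := by
    intro G h
    ext i j
    simpa using (Bform_stdBasisMatrix G i j).symm.trans (h (Matrix.single i j 1))
  exact ⟨key, fun G h => key G fun M => (Bform_symm G M).trans (h M)⟩

lemma card_split {α : Type} [Finite α] (P Q : α → Prop) :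
    Nat.card {x // P x ∧ Q x} + Nat.card {x // P x ∧ ¬ Q x} = Nat.card {x // P x} := by
  classical
  have : Fintype α := Fintype.ofFinite _
  simp only [Nat.card_eq_fintype_card, Fintype.card_subtype]
  rw [← Finset.filter_filter, ← Finset.filter_filter]
  exact Finset.card_filter_add_card_filter_not _

lemma rank_le_of_rows {t : ℕ} (ht : t ≤ l) (M : Matrix (Fin l) (Fin m) K)
    (h : ∀ (i : Fin l) (j : Fin m), t ≤ (i : ℕ) → M i j = 0) : M.rank ≤ t := by
  classical
  set P : Matrix (Fin l) (Fin t) K :=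
    Matrix.of fun i j => if (i : ℕ) = (j : ℕ) then (1 : K) else 0 with hP
  set Q : Matrix (Fin t) (Fin m) K := Matrix.of fun i j => M (Fin.castLE ht i) j with hQ
  have hM : M = P * Q := by
    ext i j
    rw [Matrix.mul_apply]
    by_cases hi : (i : ℕ) < t
    · rw [Finset.sum_eq_single (⟨(i : ℕ), hi⟩ : Fin t)]
      · have hcast : Fin.castLE ht (⟨(i : ℕ), hi⟩ : Fin t) = i := by ext; rfl
        simp [hP, hQ, hcast]
      · intro b _ hb
        have hne : (i : ℕ) ≠ (b : ℕ) := fun e => hb (Fin.ext e.symm)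
        simp [hP, hne]
      · simp
    · rw [h i j (le_of_not_gt hi)]
      refine (Finset.sum_eq_zero fun b _ => ?_).symm
      have hb := b.isLt
      have hne : (i : ℕ) ≠ (b : ℕ) := by omega
      simp [hP, hne]
  calc M.rank = (P * Q).rank := by rw [← hM]
    _ ≤ Q.rank := Matrix.rank_mul_le_right _ _
    _ ≤ t := le_trans Q.rank_le_card_height (by simp)

end Aux

/-- `nu K a b t` is the number of `a × b` matrices over the field `K` of rank at most `t`. -/
noncomputable def nu (K : Type) [Field K] [Fintype K] (a b t : ℕ) : ℕ :=
  Nat.card {M : Matrix (Fin a) (Fin b) K // M.rank ≤ t}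

theorem stmt_13 (q t l m s : ℕ) (hq : IsPrimePow q)
    (K : Type) [Field K] [Fintype K] (hK : Fintype.card K = q)
    (ht : 1 ≤ t) (htl : t ≤ l) (hlm : l ≤ m)
    (hs1 : (l - t) * m ≤ s) (hs2 : s ≤ l * m) :
    IsLeast {n : ℤ | ∃ W : Submodule K (Matrix (Fin l) (Fin m) K),
        Module.finrank K W = s ∧
        n = (Nat.card {M : Matrix (Fin l) (Fin m) K //
          M.rank ≤ t ∧ ∃ G ∈ W, Matrix.trace (G * Mᵀ) ≠ 0} : ℤ)}
      ((nu K l m t : ℤ) - (q : ℤ) ^ (l * m - s)) := by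
  classical
  have hfr : finrank K (Matrix (Fin l) (Fin m) K) = l * m := by
    simp [Module.finrank_matrix]
  have hcardS : ∀ S : Submodule K (Matrix (Fin l) (Fin m) K),
      Nat.card S = q ^ finrank K S := by
    intro S
    have : Fintype S := Fintype.ofFinite _
    rw [Nat.card_eq_fintype_card, card_eq_pow_finrank (K := K), hK]
  have hQ : ∀ (W : Submodule K (Matrix (Fin l) (Fin m) K)) (M : Matrix (Fin l) (Fin m) K),
      (¬ ∃ G ∈ W, Matrix.trace (G * Mᵀ) ≠ 0) ↔ M ∈ (Bform K l m).orthogonal W := by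
    intro W M
    push_neg
    constructor
    · intro h
      rw [LinearMap.BilinForm.mem_orthogonal_iff]
      intro G hG
      exact (Bform_trace G M).trans (h G hG)
    · intro h G hG
      rw [← Bform_trace]
      exact (LinearMap.BilinForm.mem_orthogonal_iff.mp h) G hG
  have horth : ∀ W : Submodule K (Matrix (Fin l) (Fin m) K),
      finrank K ((Bform K l m).orthogonal W) = l * m - finrank K W := by
    intro W
    rw [LinearMap.BilinForm.finrank_orthogonal Bform_nondeg W, hfr]
  constructor
  · -- membership : construct the optimal W
    have htm : l * m - s ≤ t * m := by
      have h1 : (l - t) * m = l * m - t * m := Nat.sub_mul l t m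
      have h2 : t * m ≤ l * m := Nat.mul_le_mul_right m htl
      omega
    obtain ⟨emb⟩ : Nonempty (Fin (l * m - s) ↪ Fin t × Fin m) := by
      apply Function.Embedding.nonempty_iff_card_le.mpr
      simpa using htm
    let e2 : Fin t × Fin m ↪ Fin l × Fin m :=
      ⟨fun p => (Fin.castLE htl p.1, p.2), by
        intro a b h
        simp only [Prod.mk.injEq] at h
        exact Prod.ext (Fin.castLE_injective htl h.1) h.2⟩
    let g : Fin (l * m - s) → Matrix (Fin l) (Fin m) K :=
      fun k => Matrix.stdBasis K (Fin l) (Fin m) (e2 (emb k))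
    have hg : LinearIndependent K g :=
      (Matrix.stdBasis K (Fin l) (Fin m)).linearIndependent.comp _
        (e2.injective.comp emb.injective)
    set U : Submodule K (Matrix (Fin l) (Fin m) K) := Submodule.span K (Set.range g) with hUdef
    have hU : finrank K U = l * m - s := by
      rw [hUdef, finrank_span_eq_card hg, Fintype.card_fin]
    have hUrows : ∀ M ∈ U, ∀ (i : Fin l) (j : Fin m), t ≤ (i : ℕ) → M i j = 0 := by
      intro M hM
      induction hM using Submodule.span_induction with
      | mem x hx =>
        obtain ⟨k, rfl⟩ := hx
        intro i j hij
        have : g k = Matrix.single (Fin.castLE htl (emb k).1) (emb k).2 1 :=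
          Matrix.stdBasis_eq_single K _ _
        rw [this]
        have hne : Fin.castLE htl (emb k).1 ≠ i := by
          intro e
          have := (emb k).1.isLt
          have : ((emb k).1 : ℕ) = (i : ℕ) := congrArg Fin.val e
          omega
        simp [Matrix.single, hne]
      | zero => simp
      | add x y _ _ hx hy => intro i j hij; simp [hx i j hij, hy i j hij]
      | smul c x _ hx => intro i j hij; simp [hx i j hij]
    have hUrank : ∀ M ∈ U, M.rank ≤ t := fun M hM =>
      rank_le_of_rows htl M (hUrows M hM)
    refine ⟨(Bform K l m).orthogonal U, ?_, ?_⟩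
    · rw [horth, hU]; omega
    · have hOO : (Bform K l m).orthogonal ((Bform K l m).orthogonal U) = U :=
        LinearMap.BilinForm.orthogonal_orthogonal Bform_nondeg Bform_refl U
      have hiff : ∀ M : Matrix (Fin l) (Fin m) K,
          (M.rank ≤ t ∧ ¬ ∃ G ∈ (Bform K l m).orthogonal U, Matrix.trace (G * Mᵀ) ≠ 0) ↔
            M ∈ U := by
        intro M
        constructor
        · rintro ⟨-, h⟩
          rw [hQ] at h
          rwa [hOO] at h
        · intro hM
          refine ⟨hUrank M hM, ?_⟩
          rw [hQ, hOO]
          exact hM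
      have hcount : Nat.card {M : Matrix (Fin l) (Fin m) K //
          M.rank ≤ t ∧ ¬ ∃ G ∈ (Bform K l m).orthogonal U, Matrix.trace (G * Mᵀ) ≠ 0} =
          q ^ (l * m - s) := by
        rw [Nat.card_congr (Equiv.subtypeEquivRight hiff), hcardS U, hU]
      have hsplit := card_split (fun M : Matrix (Fin l) (Fin m) K => M.rank ≤ t)
        (fun M => ∃ G ∈ (Bform K l m).orthogonal U, Matrix.trace (G * Mᵀ) ≠ 0)
      rw [hcount] at hsplit
      have hnu : Nat.card {M : Matrix (Fin l) (Fin m) K // M.rank ≤ t} = nu K l m t := rfl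
      rw [hnu] at hsplit
      have hcast : ((q : ℤ)) ^ (l * m - s) = ((q ^ (l * m - s) : ℕ) : ℤ) := by push_cast; ring
      rw [hcast]
      omega
  · -- lower bound
    rintro n ⟨W, hW, rfl⟩
    have hle : Nat.card {M : Matrix (Fin l) (Fin m) K //
        M.rank ≤ t ∧ ¬ ∃ G ∈ W, Matrix.trace (G * Mᵀ) ≠ 0} ≤ q ^ (l * m - s) := by
      have hinj : Function.Injective
          (fun x : {M : Matrix (Fin l) (Fin m) K //
            M.rank ≤ t ∧ ¬ ∃ G ∈ W, Matrix.trace (G * Mᵀ) ≠ 0} =>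
            (⟨x.1, (hQ W x.1).mp x.2.2⟩ : (Bform K l m).orthogonal W)) := by
        intro a b h
        simp only [Subtype.mk.injEq] at h
        exact Subtype.ext h
      calc _ ≤ Nat.card ((Bform K l m).orthogonal W) :=
            Nat.card_le_card_of_injective _ hinj
        _ = q ^ (l * m - s) := by rw [hcardS, horth, hW]
    have hsplit := card_split (fun M : Matrix (Fin l) (Fin m) K => M.rank ≤ t)
      (fun M => ∃ G ∈ W, Matrix.trace (G * Mᵀ) ≠ 0)
    have hnu : Nat.card {M : Matrix (Fin l) (Fin m) K // M.rank ≤ t} = nu K l m t := rfl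
    rw [hnu] at hsplit
    have hcast : ((q : ℤ)) ^ (l * m - s) = ((q ^ (l * m - s) : ℕ) : ℤ) := by push_cast; ring
    rw [hcast]
    omega
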